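/- Let H be a complex Hilbert space, [0,I] the set of effects on H, and φ : [0,I] → [0,I] a bijective map satisfying φ(ABA) = φ(A)φ(B)φ(A) for all A, B ∈ [0,I]. Then for all projections P, Q on H one has P ≤ Q if and only if φ(P) ≤ φ(Q). In particular, φ(0) = 0 and φ(I) = I, and φ maps rank-one projections to rank-one projections. -/

import Mathlib

set_option maxHeartbeats 1000000

section Aux

variable {H : Type*} [NormedAddCommGroup H] [InnerProductSpace ℂ H] [CompleteSpace H]

private lemma aux_sq_le_one {A : H →L[ℂ] H} (h0 : 0 ≤ A) (h1 : A ≤ 1) : A * A ≤ 1 := by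
  have hsa : IsSelfAdjoint A := .of_nonneg h0
  have hpos : 0 ≤ A * A := by
    have := star_mul_self_nonneg A
    rwa [hsa.star_eq] at this
  rw [← CStarAlgebra.norm_le_one_iff_of_nonneg _ hpos]
  have hn : ‖A * A‖ = ‖A‖ * ‖A‖ := by
    nth_rewrite 1 [← hsa.star_eq]
    exact CStarRing.norm_star_mul_self (x := A)
  have hA : ‖A‖ ≤ 1 := (CStarAlgebra.norm_le_one_iff_of_nonneg A h0).mpr h1
  calc ‖A * A‖ = ‖A‖ * ‖A‖ := hn
    _ ≤ 1 * 1 := mul_le_mul hA hA (norm_nonneg _) zero_le_one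
    _ = 1 := one_mul 1

private lemma aux_conj_mem {A B : H →L[ℂ] H} (hA0 : 0 ≤ A) (hA1 : A ≤ 1)
    (hB0 : 0 ≤ B) (hB1 : B ≤ 1) : 0 ≤ A * B * A ∧ A * B * A ≤ 1 := by
  have hsa : IsSelfAdjoint A := .of_nonneg hA0
  constructor
  · have := star_left_conjugate_nonneg hB0 A
    rwa [hsa.star_eq] at this
  · have h := star_left_conjugate_le_conjugate hB1 A
    rw [hsa.star_eq, mul_one] at h
    exact h.trans (aux_sq_le_one hA0 hA1)

private lemma aux_proj_mem {P : H →L[ℂ] H} (hP : IsSelfAdjoint P) (hP2 : P * P = P) :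
    0 ≤ P ∧ P ≤ 1 := by
  constructor
  · have := star_mul_self_nonneg P
    rwa [hP.star_eq, hP2] at this
  · have hQ : IsSelfAdjoint (1 - P) := (IsSelfAdjoint.one _).sub hP
    have h := star_mul_self_nonneg (1 - P)
    rw [hQ.star_eq] at h
    have hcalc : (1 - P) * (1 - P) = 1 - P := by
      simp only [sub_mul, mul_sub, one_mul, mul_one, hP2]
      abel
    rw [hcalc] at h
    exact sub_nonneg.mp h

private lemma aux_mul_of_le {P Q : H →L[ℂ] H} (hP : IsSelfAdjoint P) (hP2 : P * P = P)
    (hQ : IsSelfAdjoint Q) (hQ2 : Q * Q = Q) (h : P ≤ Q) : P * Q = P ∧ Q * P = P := by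
  have hP0 : 0 ≤ P := (aux_proj_mem hP hP2).1
  set T : H →L[ℂ] H := 1 - Q with hTdef
  have hT : IsSelfAdjoint T := (IsSelfAdjoint.one _).sub hQ
  have h1 : T * P * T ≤ T * Q * T := by
    have := star_left_conjugate_le_conjugate h T
    rwa [hT.star_eq] at this
  have hTQT : T * Q * T = 0 := by
    have hTQ : T * Q = 0 := by
      rw [hTdef, sub_mul, one_mul, hQ2, sub_self]
    rw [hTQ, zero_mul]
  have h2 : 0 ≤ T * P * T := by
    have := star_left_conjugate_nonneg hP0 T
    rwa [hT.star_eq] at this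
  have h3 : T * P * T = 0 := le_antisymm (h1.trans_eq hTQT) h2
  have hX : P * T = 0 := by
    have hstar : star (P * T) * (P * T) = 0 := by
      rw [star_mul, hT.star_eq, hP.star_eq, ← mul_assoc, mul_assoc T P P, hP2, h3]
    exact (CStarRing.star_mul_self_eq_zero_iff _).mp hstar
  have hPQ : P * Q = P := by
    rw [hTdef, mul_sub, mul_one] at hX
    have := sub_eq_zero.mp hX
    exact this.symm
  refine ⟨hPQ, ?_⟩
  have := congrArg star hPQ
  rwa [star_mul, hP.star_eq, hQ.star_eq] at this

private lemma aux_le_of_conj {P Q : H →L[ℂ] H} (hP1 : P ≤ 1)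
    (hQ : IsSelfAdjoint Q) (hQ2 : Q * Q = Q) (h : Q * P * Q = P) : P ≤ Q := by
  have h1 : 0 ≤ Q * (1 - P) * Q := by
    have := star_left_conjugate_nonneg (sub_nonneg.mpr hP1) Q
    rwa [hQ.star_eq] at this
  have h2 : Q * (1 - P) * Q = Q - P := by
    rw [mul_sub, mul_one, sub_mul, hQ2, h]
  rw [h2] at h1
  exact sub_nonneg.mp h1

private lemma aux_le_iff_conj {P Q : H →L[ℂ] H} (hP : IsSelfAdjoint P) (hP2 : P * P = P)
    (hQ : IsSelfAdjoint Q) (hQ2 : Q * Q = Q) : P ≤ Q ↔ Q * P * Q = P := by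
  constructor
  · intro h
    obtain ⟨hPQ, hQP⟩ := aux_mul_of_le hP hP2 hQ hQ2 h
    rw [hQP, hPQ]
  · exact aux_le_of_conj (aux_proj_mem hP hP2).2 hQ hQ2

omit [CompleteSpace H] in
private lemma aux_fix {P : H →L[ℂ] H} (hP2 : P * P = P) {x : H}
    (hx : x ∈ LinearMap.range (P : H →ₗ[ℂ] H)) : P x = x := by
  obtain ⟨y, hy⟩ := hx
  have h2 : P (P y) = P y := by
    have := congrArg (fun (T : H →L[ℂ] H) => T y) hP2
    simpa [ContinuousLinearMap.mul_apply] using this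
  simp only [ContinuousLinearMap.coe_coe] at hy
  rw [← hy]
  exact h2

private lemma aux_eq_of_range_eq {P Q : H →L[ℂ] H} (hP : IsSelfAdjoint P) (hP2 : P * P = P)
    (hQ : IsSelfAdjoint Q) (hQ2 : Q * Q = Q)
    (h : LinearMap.range (P : H →ₗ[ℂ] H) = LinearMap.range (Q : H →ₗ[ℂ] H)) : P = Q := by
  have hQP : Q * P = P := by
    ext x
    have hx : P x ∈ LinearMap.range (Q : H →ₗ[ℂ] H) := h ▸ ⟨x, rfl⟩
    simpa [ContinuousLinearMap.mul_apply] using aux_fix hQ2 hx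
  have hPQ : P * Q = Q := by
    ext x
    have hx : Q x ∈ LinearMap.range (P : H →ₗ[ℂ] H) := h.symm ▸ ⟨x, rfl⟩
    simpa [ContinuousLinearMap.mul_apply] using aux_fix hP2 hx
  have := congrArg star hQP
  rw [star_mul, hP.star_eq, hQ.star_eq, hPQ] at this
  exact this.symm

private lemma aux_span_proj (u : H) (hu : u ≠ 0) :
    ∃ Q : H →L[ℂ] H, IsSelfAdjoint Q ∧ Q * Q = Q ∧
      LinearMap.range (Q : H →ₗ[ℂ] H) = (ℂ ∙ u) ∧ Q u = u := by
  set U : Submodule ℂ H := ℂ ∙ u with hU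
  haveI : CompleteSpace U := FiniteDimensional.complete ℂ U
  set Q : H →L[ℂ] H := U.subtypeL ∘L U.orthogonalProjectionOnto with hQdef
  have hfix : ∀ x ∈ U, Q x = x := by
    intro x hx
    have := Submodule.orthogonalProjectionOnto_mem_subspace_eq_self (K := U) ⟨x, hx⟩
    simp only [hQdef, ContinuousLinearMap.comp_apply, Submodule.subtypeL_apply]
    rw [this]
  have hmemQ : ∀ x, Q x ∈ U := fun x => (U.orthogonalProjectionOnto x).2
  refine ⟨Q, isSelfAdjoint_starProjection U, ?_, ?_, ?_⟩
  · ext x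
    simp only [ContinuousLinearMap.mul_apply]
    exact hfix _ (hmemQ x)
  · apply le_antisymm
    · rintro x ⟨y, rfl⟩
      exact hmemQ y
    · rw [hU, Submodule.span_le]
      rintro x hx
      rw [Set.mem_singleton_iff] at hx
      subst hx
      exact ⟨x, hfix x (Submodule.mem_span_singleton_self x)⟩
  · exact hfix u (Submodule.mem_span_singleton_self u)

/-- Rank-one projections are minimal. -/
private lemma aux_minimal {P A : H →L[ℂ] H} (hP : IsSelfAdjoint P) (hP2 : P * P = P)
    (hrank : Module.finrank ℂ (LinearMap.range (P : H →ₗ[ℂ] H)) = 1)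
    (hA : IsSelfAdjoint A) (hA2 : A * A = A) (hle : A ≤ P) : A = 0 ∨ A = P := by
  obtain ⟨hAP, hPA⟩ := aux_mul_of_le hA hA2 hP hP2 hle
  have hsub : LinearMap.range (A : H →ₗ[ℂ] H) ≤ LinearMap.range (P : H →ₗ[ℂ] H) := by
    rintro x ⟨y, rfl⟩
    refine ⟨A y, ?_⟩
    simp only [ContinuousLinearMap.coe_coe]
    have := congrArg (fun (T : H →L[ℂ] H) => T y) hPA
    simpa [ContinuousLinearMap.mul_apply] using this
  haveI hfdP : FiniteDimensional ℂ (LinearMap.range (P : H →ₗ[ℂ] H)) :=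
    FiniteDimensional.of_finrank_pos (by rw [hrank]; norm_num)
  haveI hfdA : FiniteDimensional ℂ (LinearMap.range (A : H →ₗ[ℂ] H)) :=
    Submodule.finiteDimensional_of_le hsub
  have hle1 : Module.finrank ℂ (LinearMap.range (A : H →ₗ[ℂ] H)) ≤ 1 := by
    rw [← hrank]
    exact Submodule.finrank_mono hsub
  rcases Nat.le_one_iff_eq_zero_or_eq_one.mp hle1 with hr | hr
  · left
    have hbot : LinearMap.range (A : H →ₗ[ℂ] H) = ⊥ := Submodule.finrank_eq_zero.mp hr
    ext x
    have : A x ∈ LinearMap.range (A : H →ₗ[ℂ] H) := ⟨x, rfl⟩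
    rw [hbot] at this
    simpa using this
  · right
    have heq : LinearMap.range (A : H →ₗ[ℂ] H) = LinearMap.range (P : H →ₗ[ℂ] H) :=
      Submodule.eq_of_le_of_finrank_eq hsub (by rw [hr, hrank])
    exact aux_eq_of_range_eq hA hA2 hP hP2 heq

end Aux

/-- A bijective Jordan triple multiplicative map of the Hilbert space effect algebra `[0, I]`
preserves the order on projections in both directions; in particular it fixes `0` and `I` and
maps rank-one projections to rank-one projections. -/
theorem jordan_triple_bijection_of_effects_order_on_projections
    {H : Type*} [NormedAddCommGroup H] [InnerProductSpace ℂ H] [CompleteSpace H]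
    (φ : (H →L[ℂ] H) → (H →L[ℂ] H))
    (hbij : Set.BijOn φ {A : H →L[ℂ] H | 0 ≤ A ∧ A ≤ 1} {A : H →L[ℂ] H | 0 ≤ A ∧ A ≤ 1})
    (htriple : ∀ A : H →L[ℂ] H, 0 ≤ A → A ≤ 1 → ∀ B : H →L[ℂ] H, 0 ≤ B → B ≤ 1 →
      φ (A * B * A) = φ A * φ B * φ A) :
    (∀ P Q : H →L[ℂ] H, IsSelfAdjoint P → P * P = P → IsSelfAdjoint Q → Q * Q = Q →
      (P ≤ Q ↔ φ P ≤ φ Q)) ∧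
    φ 0 = 0 ∧ φ 1 = 1 ∧
    (∀ P : H →L[ℂ] H, IsSelfAdjoint P → P * P = P →
      Module.finrank ℂ (LinearMap.range (P : H →ₗ[ℂ] H)) = 1 →
      IsSelfAdjoint (φ P) ∧ φ P * φ P = φ P ∧
        Module.finrank ℂ (LinearMap.range (φ P : H →ₗ[ℂ] H)) = 1) := by
  set S : Set (H →L[ℂ] H) := {A : H →L[ℂ] H | 0 ≤ A ∧ A ≤ 1} with hS
  have hmemS : ∀ {A : H →L[ℂ] H}, A ∈ S ↔ (0 ≤ A ∧ A ≤ 1) := fun {A} => Iff.rfl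
  have hSconj : ∀ {A B : H →L[ℂ] H}, A ∈ S → B ∈ S → A * B * A ∈ S := by
    intro A B hA hB
    exact hmemS.mpr (aux_conj_mem hA.1 hA.2 hB.1 hB.2)
  have h1S : (1 : H →L[ℂ] H) ∈ S := ⟨zero_le_one, le_refl 1⟩
  have h0S : (0 : H →L[ℂ] H) ∈ S := ⟨le_refl 0, zero_le_one⟩
  -- φ 1 = 1
  have hφ1 : φ 1 = 1 := by
    obtain ⟨A, hA, hA1⟩ := hbij.surjOn h1S
    have hid : ∀ B ∈ S, A * B * A = B := by
      intro B hB
      apply hbij.injOn (hSconj hA hB) hB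
      rw [htriple A hA.1 hA.2 B hB.1 hB.2, hA1, one_mul, mul_one]
    have hAA : A * A = 1 := by
      have := hid 1 h1S
      rwa [mul_one] at this
    have hAeq : A = 1 := by
      set T : H →L[ℂ] H := 1 - A with hTdef
      have hT0 : 0 ≤ T := sub_nonneg.mpr hA.2
      have hT1 : T ≤ 1 := by
        rw [hTdef]
        simpa using sub_le_sub_left hA.1 1
      have hTsa : IsSelfAdjoint T := .of_nonneg hT0
      have hTT : T * T = T + T := by
        simp only [hTdef, sub_mul, mul_sub, one_mul, mul_one, hAA]
        abel
      have hnorm : ‖T‖ * ‖T‖ = 2 * ‖T‖ := by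
        have h1 : ‖T * T‖ = ‖T‖ * ‖T‖ := by
          nth_rewrite 1 [← hTsa.star_eq]
          exact CStarRing.norm_star_mul_self (x := T)
        have h2 : ‖T * T‖ = 2 * ‖T‖ := by
          rw [hTT, ← two_smul ℝ T, norm_smul]
          simp
        rw [← h1, h2]
      have hTle : ‖T‖ ≤ 1 := (CStarAlgebra.norm_le_one_iff_of_nonneg T hT0).mpr hT1
      have hTzero : ‖T‖ = 0 := by
        by_contra hne
        have h2 : ‖T‖ = 2 := mul_right_cancel₀ hne hnorm
        linarith
      have : T = 0 := norm_eq_zero.mp hTzero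
      have := sub_eq_zero.mp (hTdef ▸ this)
      exact this.symm
    exact hAeq ▸ hA1
  -- φ 0 = 0
  have hφ0 : φ 0 = 0 := by
    obtain ⟨Z, hZ, hZ0⟩ := hbij.surjOn h0S
    have hid : ∀ B ∈ S, Z * B * Z = Z := by
      intro B hB
      apply hbij.injOn (hSconj hZ hB) hZ
      rw [htriple Z hZ.1 hZ.2 B hB.1 hB.2, hZ0, zero_mul, mul_zero]
    have hZeq : Z = 0 := by
      have := hid 0 h0S
      rwa [mul_zero, zero_mul, eq_comm] at this
    exact hZeq ▸ hZ0
  -- projections map to projections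
  have hproj : ∀ P : H →L[ℂ] H, IsSelfAdjoint P → P * P = P →
      (φ P ∈ S ∧ IsSelfAdjoint (φ P) ∧ φ P * φ P = φ P) := by
    intro P hPsa hP2
    have hPS : P ∈ S := hmemS.mpr (aux_proj_mem hPsa hP2)
    have hφPS : φ P ∈ S := hbij.mapsTo hPS
    have hidem : φ P * φ P = φ P := by
      have := htriple P hPS.1 hPS.2 1 h1S.1 h1S.2
      rw [mul_one, hP2, hφ1, mul_one] at this
      exact this.symm
    exact ⟨hφPS, .of_nonneg hφPS.1, hidem⟩
  -- order preservation
  have horder : ∀ P Q : H →L[ℂ] H, IsSelfAdjoint P → P * P = P → IsSelfAdjoint Q → Q * Q = Q →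
      (P ≤ Q ↔ φ P ≤ φ Q) := by
    intro P Q hPsa hP2 hQsa hQ2
    have hPS : P ∈ S := hmemS.mpr (aux_proj_mem hPsa hP2)
    have hQS : Q ∈ S := hmemS.mpr (aux_proj_mem hQsa hQ2)
    obtain ⟨hφPS, hφPsa, hφP2⟩ := hproj P hPsa hP2
    obtain ⟨hφQS, hφQsa, hφQ2⟩ := hproj Q hQsa hQ2
    constructor
    · intro h
      have hconj : Q * P * Q = P := (aux_le_iff_conj hPsa hP2 hQsa hQ2).mp h
      have := htriple Q hQS.1 hQS.2 P hPS.1 hPS.2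
      rw [hconj] at this
      exact (aux_le_iff_conj hφPsa hφP2 hφQsa hφQ2).mpr this.symm
    · intro h
      have hconj : φ Q * φ P * φ Q = φ P := (aux_le_iff_conj hφPsa hφP2 hφQsa hφQ2).mp h
      have heq : φ (Q * P * Q) = φ P := by
        rw [htriple Q hQS.1 hQS.2 P hPS.1 hPS.2, hconj]
      have : Q * P * Q = P := hbij.injOn (hSconj hQS hPS) hPS heq
      exact (aux_le_iff_conj hPsa hP2 hQsa hQ2).mpr this
  refine ⟨horder, hφ0, hφ1, ?_⟩
  -- rank-one preservation
  intro P hPsa hP2 hrank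
  obtain ⟨hφPS, hφPsa, hφP2⟩ := hproj P hPsa hP2
  refine ⟨hφPsa, hφP2, ?_⟩
  have hPS : P ∈ S := hmemS.mpr (aux_proj_mem hPsa hP2)
  -- φ P ≠ 0
  have hφPne : φ P ≠ 0 := by
    intro h
    have : P = (0 : H →L[ℂ] H) := hbij.injOn hPS h0S (by rw [h, hφ0])
    rw [this] at hrank
    have : LinearMap.range ((0 : H →L[ℂ] H) : H →ₗ[ℂ] H) = ⊥ := by
      ext x; simp
    rw [this] at hrank
    simp at hrank
  -- pick a nonzero vector in the range of φ P
  obtain ⟨x, hx⟩ : ∃ x, φ P x ≠ 0 := by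
    by_contra h
    push_neg at h
    exact hφPne (by ext y; simpa using h y)
  set u : H := φ P x with hu
  obtain ⟨Q, hQsa, hQ2, hQrange, hQu⟩ := aux_span_proj u hx
  -- Q ≤ φ P
  have huP : u ∈ LinearMap.range ((φ P : H →L[ℂ] H) : H →ₗ[ℂ] H) := ⟨x, rfl⟩
  have hRQ : φ P * Q = Q := by
    ext y
    have hy : Q y ∈ LinearMap.range ((φ P : H →L[ℂ] H) : H →ₗ[ℂ] H) := by
      have hQy : Q y ∈ (ℂ ∙ u) := by rw [← hQrange]; exact ⟨y, rfl⟩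
      have hspan : (ℂ ∙ u) ≤ LinearMap.range ((φ P : H →L[ℂ] H) : H →ₗ[ℂ] H) := by
        rw [Submodule.span_le]
        rintro z hz
        rw [Set.mem_singleton_iff] at hz
        subst hz
        exact huP
      exact hspan hQy
    simpa [ContinuousLinearMap.mul_apply] using aux_fix hφP2 hy
  have hQR : Q * φ P = Q := by
    have := congrArg star hRQ
    rwa [star_mul, hQsa.star_eq, hφPsa.star_eq] at this
  have hQle : Q ≤ φ P := by
    apply aux_le_of_conj (aux_proj_mem hQsa hQ2).2 hφPsa hφP2
    rw [hRQ, hQR]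
  -- pull back Q through φ
  have hQS : Q ∈ S := hmemS.mpr (aux_proj_mem hQsa hQ2)
  obtain ⟨A, hAS, hAQ⟩ := hbij.surjOn hQS
  have hA2 : A * A = A := by
    have heq : φ (A * 1 * A) = φ A := by
      rw [htriple A hAS.1 hAS.2 1 h1S.1 h1S.2, hφ1, mul_one, hAQ, hQ2]
    have : A * 1 * A = A := hbij.injOn (hSconj hAS h1S) hAS heq
    rwa [mul_one] at this
  have hAsa : IsSelfAdjoint A := .of_nonneg hAS.1
  have hAle : A ≤ P := by
    rw [horder A P hAsa hA2 hPsa hP2, hAQ]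
    exact hQle
  rcases aux_minimal hPsa hP2 hrank hAsa hA2 hAle with hA0 | hAP
  · exfalso
    apply hx
    have : Q = 0 := by rw [← hAQ, hA0, hφ0]
    rw [← hQu, this]
    simp
  · have : Q = φ P := by rw [← hAQ, hAP]
    rw [← this, hQrange]
    exact finrank_span_singleton hx
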